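/- Second ex-post efficiency guarantee of the Trade Reduction mechanism for matching markets: let M be a nonempty maximum-weight matching of the matching market G with weight OPT, and define GFT_TR = Σ over buyer classes t with q_t > 0 of (the sum of the q_t − d_t largest values among all class-t buyers) minus Σ over seller classes t with q_t > 0 of (the sum of the q_t − d_t smallest costs among all class-t sellers). Then GFT_TR ≥ β · OPT, where β = min{ 1 − 1/r_{t,t'} : t, t' classes with r_{t,t'} > 0 }. -/

import Mathlib

open Finset

/-- A matching of the bipartite graph with buyer vertices `B`, seller vertices `S` and
edge relation `E`: a finite set of edges (buyer–seller pairs) that are pairwise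
vertex-disjoint. -/
def IsMatchingOn {B S : Type*} (E : B → S → Prop) (M : Finset (B × S)) : Prop :=
  (∀ p ∈ M, E p.1 p.2) ∧
  (∀ p ∈ M, ∀ q ∈ M, p.1 = q.1 → p = q) ∧
  (∀ p ∈ M, ∀ q ∈ M, p.2 = q.2 → p = q)

/-- The weight (gains from trade) of a matching: `∑_{(i,j) ∈ M} (b i - s j)`. -/
noncomputable def matchWeight {B S : Type*} (b : B → ℝ) (s : S → ℝ)
    (M : Finset (B × S)) : ℝ :=
  ∑ p ∈ M, (b p.1 - s p.2)

/-- The sum of the `k` largest elements of a finite multiset of reals. -/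
noncomputable def topSum (m : Multiset ℝ) (k : ℕ) : ℝ :=
  (((m.sort (· ≤ ·)).reverse).take k).sum

/-- The sum of the `k` smallest elements of a finite multiset of reals. -/
noncomputable def botSum (m : Multiset ℝ) (k : ℕ) : ℝ :=
  ((m.sort (· ≤ ·)).take k).sum

lemma take_sum_le_of_sorted : ∀ (l : List ℝ), l.Pairwise (· ≤ ·) →
    ∀ (m : Multiset ℝ), m ≤ ↑l → (l.take (Multiset.card m)).sum ≤ m.sum := by
  intro l
  induction l with
  | nil =>
    intro _ m hm
    have : m = 0 := Multiset.le_zero.mp (by simpa using hm)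
    simp [this]
  | cons a l ih =>
    intro hs m hm
    by_cases ha : a ∈ m
    · have hm' : m.erase a ≤ ↑l := by
        have := Multiset.erase_le_erase a hm
        simpa using this
      have hc : Multiset.card m = Multiset.card (m.erase a) + 1 := by
        rw [Multiset.card_erase_of_mem ha]
        exact (Nat.succ_pred_eq_of_pos (Multiset.card_pos_iff_exists_mem.mpr ⟨a, ha⟩)).symm
      have h2 := ih hs.of_cons (m.erase a) hm'
      calc ((a :: l).take (Multiset.card m)).sum
          = a + (l.take (Multiset.card (m.erase a))).sum := by rw [hc]; simp
        _ ≤ a + (m.erase a).sum := by linarith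
        _ = m.sum := by rw [← Multiset.sum_cons, Multiset.cons_erase ha]
    · have hm' : m ≤ ↑l := by
        rcases Multiset.le_iff_exists_add.mp hm with ⟨u, hu⟩
        have hau : a ∈ u := by
          have : a ∈ m + u := by rw [← hu]; simp
          rcases Multiset.mem_add.mp this with h | h
          · exact absurd h ha
          · exact h
        have heq : (↑l : Multiset ℝ) = m + u.erase a := by
          have h6 : m + u = a ::ₘ (m + u.erase a) := by
            rw [← Multiset.add_cons, Multiset.cons_erase hau]
          have h5 : a ::ₘ (↑l : Multiset ℝ) = a ::ₘ (m + u.erase a) := by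
            rw [show a ::ₘ (↑l : Multiset ℝ) = ↑(a :: l) from rfl, hu, h6]
          exact (Multiset.cons_inj_right a).mp h5
        exact Multiset.le_iff_exists_add.mpr ⟨u.erase a, heq⟩
      rcases Nat.eq_zero_or_eq_succ_pred (Multiset.card m) with h0 | hk
      · have : m = 0 := Multiset.card_eq_zero.mp h0
        simp [this]
      · set k := (Multiset.card m).pred with hkdef
        have hklt : k < l.length := by
          have := Multiset.card_le_card hm'
          simp [Multiset.coe_card] at this
          omega
        have h2 := ih hs.of_cons m hm'
        have h3 : (l.take (Multiset.card m)).sum = (l.take k).sum + l[k] := by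
          rw [hk]; exact List.sum_take_succ l k hklt
        have h4 : a ≤ l[k] := (List.pairwise_cons.mp hs).1 _ (List.getElem_mem hklt)
        calc ((a :: l).take (Multiset.card m)).sum
            = a + (l.take k).sum := by rw [hk]; simp
          _ ≤ (l.take k).sum + l[k] := by linarith
          _ = (l.take (Multiset.card m)).sum := h3.symm
          _ ≤ m.sum := h2

lemma botSum_le_sum {m m' : Multiset ℝ} (h : m' ≤ m) :
    botSum m (Multiset.card m') ≤ m'.sum := by
  have hl : (↑(m.sort (· ≤ ·)) : Multiset ℝ) = m := Multiset.sort_eq _ _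
  exact take_sum_le_of_sorted _ (Multiset.pairwise_sort _ _) m' (by rw [hl]; exact h)

lemma sum_le_takeSum_of_antisorted {l : List ℝ} (hl : l.Pairwise (· ≥ ·))
    {m : Multiset ℝ} (hm : m ≤ ↑l) : m.sum ≤ (l.take (Multiset.card m)).sum := by
  have hneg : (l.map (fun x => -x)).Pairwise (· ≤ ·) := by
    rw [List.pairwise_map]
    exact hl.imp (by intro a b hab; simpa using hab)
  have hmle : m.map (fun x => -x) ≤ ↑(l.map (fun x => -x)) := by
    rw [← Multiset.map_coe]
    exact Multiset.map_le_map hm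
  have h := take_sum_le_of_sorted _ hneg _ hmle
  rw [Multiset.card_map, ← List.map_take] at h
  have e1 : ∀ L : List ℝ, (List.map (fun x : ℝ => -x) L).sum = -L.sum := by
    intro L
    induction L with
    | nil => simp
    | cons x xs ihx => simp [ihx]; ring
  have e2 : ∀ mm : Multiset ℝ, (Multiset.map (fun x : ℝ => -x) mm).sum = -mm.sum := by
    intro mm
    induction mm using Multiset.induction with
    | empty => simp
    | cons x xs ihx => simp [ihx]; ring
  rw [e1, e2] at h
  linarith

lemma sum_le_topSum {m m' : Multiset ℝ} (h : m' ≤ m) :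
    m'.sum ≤ topSum m (Multiset.card m') := by
  have hrev : ((m.sort (· ≤ ·)).reverse).Pairwise (· ≥ ·) := by
    rw [List.pairwise_reverse]
    have hss := Multiset.pairwise_sort (α := ℝ) m (· ≤ ·)
    exact hss.imp (fun hab => hab)
  apply sum_le_takeSum_of_antisorted hrev
  rw [show (↑(m.sort (· ≤ ·)).reverse : Multiset ℝ) = ↑(m.sort (· ≤ ·)) from
    (Multiset.coe_reverse _), Multiset.sort_eq]
  exact h


/-- **Second ex-post efficiency guarantee of the Trade Reduction mechanism for matching
markets.** With the same setup as the `α`-guarantee, the Trade Reduction gains from trade is at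
least `β · OPT`, where `β = min { 1 - 1/(r t t') : t, t' classes with r t t' > 0 }` and
`r t t'` is the number of edges of the first-best matching `M` joining a class-`t` buyer and a
class-`t'` seller. -/
theorem trade_reduction_matching_markets_beta
    {B S ι κ : Type*} [Fintype B] [Fintype S] [Fintype ι] [Fintype κ]
    [DecidableEq B] [DecidableEq S] [DecidableEq ι] [DecidableEq κ]
    (E : B → S → Prop) (b : B → ℝ) (s : S → ℝ)
    (hbpos : ∀ i, 0 < b i) (hspos : ∀ j, 0 < s j)
    (cB : B → ι) (cS : S → κ)
    (hcB : ∀ i i', cB i = cB i' ↔ ∀ j, E i j ↔ E i' j)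
    (hcS : ∀ j j', cS j = cS j' ↔ ∀ i, E i j ↔ E i j')
    (M : Finset (B × S))
    (hM : IsMatchingOn E M) (hMne : M.Nonempty)
    (hMmax : ∀ N, IsMatchingOn E N → matchWeight b s N ≤ matchWeight b s M)
    (qB : ι → ℕ) (hqB : ∀ t, qB t = (M.filter fun p => cB p.1 = t).card)
    (qS : κ → ℕ) (hqS : ∀ t, qS t = (M.filter fun p => cS p.2 = t).card)
    (dB : ι → ℕ)
    (hdB : ∀ t, dB t = ((M.filter fun p => cB p.1 = t).image fun p => cS p.2).card)
    (dS : κ → ℕ)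
    (hdS : ∀ t, dS t = ((M.filter fun p => cS p.2 = t).image fun p => cB p.1).card)
    (r : ι → κ → ℕ)
    (hr : ∀ t t', r t t' = (M.filter fun p => cB p.1 = t ∧ cS p.2 = t').card) :
    (∑ t ∈ univ.filter fun t => 0 < qB t,
        topSum ((univ.filter fun i => cB i = t).val.map b) (qB t - dB t)) -
      (∑ t ∈ univ.filter fun t => 0 < qS t,
        botSum ((univ.filter fun j => cS j = t).val.map s) (qS t - dS t)) ≥
    (sInf {x : ℝ | ∃ t : ι, ∃ t' : κ, 0 < r t t' ∧ x = 1 - 1 / (r t t' : ℝ)}) *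
      matchWeight b s M := by
  classical
  set w : B × S → ℝ := fun p => b p.1 - s p.2 with hw
  have hsubmatch : ∀ N : Finset (B × S), N ⊆ M → IsMatchingOn E N := by
    intro N hN
    obtain ⟨h1, h2, h3⟩ := hM
    exact ⟨fun p hp => h1 p (hN hp), fun p hp q hq => h2 p (hN hp) q (hN hq),
      fun p hp q hq => h3 p (hN hp) q (hN hq)⟩
  have hw0 : ∀ p ∈ M, 0 ≤ w p := by
    intro p hp
    have h1 := hMmax (M.erase p) (hsubmatch _ (Finset.erase_subset _ _))
    have h2 : matchWeight b s (M.erase p) + w p = matchWeight b s M := by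
      unfold matchWeight
      exact Finset.sum_erase_add M _ hp
    linarith
  have hOPTw : matchWeight b s M = ∑ p ∈ M, w p := rfl
  have hOPT0 : 0 ≤ matchWeight b s M := by
    rw [hOPTw]; exact Finset.sum_nonneg hw0
  set G : ι → κ → Finset (B × S) :=
    fun t t' => M.filter fun p => cB p.1 = t ∧ cS p.2 = t' with hG
  have hrG : ∀ t t', r t t' = (G t t').card := hr
  set P : Finset (ι × κ) := Finset.univ.filter fun tt => (G tt.1 tt.2).Nonempty with hP
  have hmemP : ∀ tt : ι × κ, tt ∈ P ↔ (G tt.1 tt.2).Nonempty := by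
    intro tt; rw [hP]; simp
  have hmemG : ∀ (t : ι) (t' : κ) (p : B × S),
      p ∈ G t t' ↔ p ∈ M ∧ cB p.1 = t ∧ cS p.2 = t' := by
    intro t t' p; rw [hG]; simp
  have hPne : P.Nonempty := by
    obtain ⟨p, hp⟩ := hMne
    exact ⟨(cB p.1, cS p.2), (hmemP _).mpr ⟨p, (hmemG _ _ _).mpr ⟨hp, rfl, rfl⟩⟩⟩
  obtain ⟨t0, ht0P, ht0min⟩ := P.exists_min_image (fun tt => r tt.1 tt.2) hPne
  set n : ℕ := r t0.1 t0.2 with hn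
  have hn1 : 1 ≤ n := by
    have := (hmemP t0).mp ht0P
    have := Finset.card_pos.mpr this
    rw [hn, hrG]; omega
  have hnR : (0:ℝ) < (n:ℝ) := by exact_mod_cast hn1
  -- choose a minimum-weight edge in each nonempty group
  have hgex : ∀ tt : ι × κ, tt ∈ P →
      ∃ p, p ∈ G tt.1 tt.2 ∧ ∀ q ∈ G tt.1 tt.2, w p ≤ w q := by
    intro tt htt
    obtain ⟨p, hp, hmin⟩ := (G tt.1 tt.2).exists_min_image w ((hmemP tt).mp htt)
    exact ⟨p, hp, hmin⟩
  have hnety : Nonempty (B × S) := ⟨hMne.choose⟩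
  choose! g hg1 hg2 using hgex
  set D : Finset (B × S) := P.image g with hD
  have hgM : ∀ tt ∈ P, g tt ∈ M := fun tt htt => ((hmemG _ _ _).mp (hg1 tt htt)).1
  have hgB : ∀ tt ∈ P, cB (g tt).1 = tt.1 := fun tt htt =>
    ((hmemG _ _ _).mp (hg1 tt htt)).2.1
  have hgS : ∀ tt ∈ P, cS (g tt).2 = tt.2 := fun tt htt =>
    ((hmemG _ _ _).mp (hg1 tt htt)).2.2
  have hginj : ∀ tt1 ∈ P, ∀ tt2 ∈ P, g tt1 = g tt2 → tt1 = tt2 := by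
    intro tt1 h1 tt2 h2 heq
    have e1 : tt1.1 = tt2.1 := by rw [← hgB tt1 h1, ← hgB tt2 h2, heq]
    have e2 : tt1.2 = tt2.2 := by rw [← hgS tt1 h1, ← hgS tt2 h2, heq]
    exact Prod.ext e1 e2
  have hDM : D ⊆ M := by
    intro p hp
    rw [hD] at hp
    obtain ⟨tt, htt, rfl⟩ := Finset.mem_image.mp hp
    exact hgM tt htt
  have hDsum : ∑ p ∈ D, w p = ∑ tt ∈ P, w (g tt) := by
    rw [hD]; exact Finset.sum_image hginj
  -- group filter characterization
  have hfilt : ∀ tt : ι × κ,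
      M.filter (fun p => (cB p.1, cS p.2) = tt) = G tt.1 tt.2 := by
    intro tt
    rw [hG]
    apply Finset.filter_congr
    intro p _
    simp [Prod.ext_iff]
  have hGempty : ∀ tt : ι × κ, tt ∉ P → G tt.1 tt.2 = ∅ := by
    intro tt htt
    exact Finset.not_nonempty_iff_eq_empty.mp (fun h => htt ((hmemP tt).mpr h))
  have hfibw : ∀ f : B × S → ℝ, ∀ X : Finset (B × S), X ⊆ M →
      ∑ tt ∈ P, ∑ q ∈ (G tt.1 tt.2) ∩ X, f q = ∑ p ∈ X, f p := by
    intro f X hX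
    have h2 : ∑ tt ∈ P, ∑ q ∈ (G tt.1 tt.2) ∩ X, f q
        = ∑ tt : ι × κ, ∑ q ∈ (G tt.1 tt.2) ∩ X, f q := by
      apply Finset.sum_subset (Finset.subset_univ P)
      intro tt _ htt
      rw [hGempty tt htt]
      simp
    rw [h2, ← Finset.sum_fiberwise X (fun p => (cB p.1, cS p.2)) f]
    apply Finset.sum_congr rfl
    intro tt _
    apply Finset.sum_congr _ (fun _ _ => rfl)
    ext p
    have hpM : p ∈ X → p ∈ M := fun h => hX h
    simp only [Finset.mem_filter, Finset.mem_inter, hmemG, Prod.ext_iff]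
    tauto
  have hfib : ∑ tt ∈ P, ∑ q ∈ G tt.1 tt.2, w q = ∑ p ∈ M, w p := by
    have := hfibw w M (Finset.Subset.refl M)
    rw [← this]
    apply Finset.sum_congr rfl
    intro tt htt
    rw [Finset.inter_eq_left.mpr]
    intro p hp
    exact ((hmemG _ _ _).mp hp).1
  -- the sum over chosen edges is at most OPT / n
  have hGsub : ∀ tt : ι × κ, G tt.1 tt.2 ⊆ M := by
    intro tt p hp; exact ((hmemG _ _ _).mp hp).1
  have hDle : ∑ p ∈ D, w p ≤ (1 / (n:ℝ)) * ∑ p ∈ M, w p := by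
    rw [hDsum, ← hfib, Finset.mul_sum]
    apply Finset.sum_le_sum
    intro tt htt
    have hgrpsum0 : 0 ≤ ∑ q ∈ G tt.1 tt.2, w q :=
      Finset.sum_nonneg (fun q hq => hw0 q (hGsub tt hq))
    have hcard : ((r tt.1 tt.2 : ℕ) : ℝ) * w (g tt) ≤ ∑ q ∈ G tt.1 tt.2, w q := by
      have h := Finset.card_nsmul_le_sum (G tt.1 tt.2) w (w (g tt)) (hg2 tt htt)
      rw [nsmul_eq_mul] at h
      rw [hrG]
      exact h
    have hnle : (n : ℝ) ≤ (r tt.1 tt.2 : ℝ) := by exact_mod_cast ht0min tt htt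
    have hwg0 : 0 ≤ w (g tt) := hw0 _ (hgM tt htt)
    rw [div_mul_eq_mul_div, le_div_iff₀ hnR, one_mul]  -- reorganize?
    calc w (g tt) * (n:ℝ) = (n:ℝ) * w (g tt) := by ring
      _ ≤ (r tt.1 tt.2 : ℝ) * w (g tt) := by
          apply mul_le_mul_of_nonneg_right hnle hwg0
      _ ≤ ∑ q ∈ G tt.1 tt.2, w q := hcard
  -- injectivity of projections on subsets of M
  have hfstinj : ∀ X : Finset (B × S), X ⊆ M → Set.InjOn (Prod.fst : B × S → B) ↑X := by
    intro X hX p hp q hq hpq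
    exact hM.2.1 p (hX hp) q (hX hq) hpq
  have hsndinj : ∀ X : Finset (B × S), X ⊆ M → Set.InjOn (Prod.snd : B × S → S) ↑X := by
    intro X hX p hp q hq hpq
    exact hM.2.2 p (hX hp) q (hX hq) hpq
  -- buyer-side bound
  have hbuyer : ∀ t : ι,
      ∑ p ∈ (M.filter fun p => cB p.1 = t) \ D, b p.1 ≤
        topSum ((univ.filter fun i => cB i = t).val.map b) (qB t - dB t) := by
    intro t
    set Mt : Finset (B × S) := M.filter fun p => cB p.1 = t with hMt
    have hMtM : Mt ⊆ M := Finset.filter_subset _ _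
    have hMtD : Mt ∩ D = (P.filter fun tt => tt.1 = t).image g := by
      ext p
      constructor
      · intro hp
        obtain ⟨hp1, hp2⟩ := Finset.mem_inter.mp hp
        rw [hD] at hp2
        obtain ⟨tt, htt, rfl⟩ := Finset.mem_image.mp hp2
        refine Finset.mem_image.mpr ⟨tt, Finset.mem_filter.mpr ⟨htt, ?_⟩, rfl⟩
        rw [← hgB tt htt]
        exact (Finset.mem_filter.mp hp1).2
      · intro hp
        obtain ⟨tt, htt, rfl⟩ := Finset.mem_image.mp hp
        obtain ⟨httP, htt1⟩ := Finset.mem_filter.mp htt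
        refine Finset.mem_inter.mpr ⟨Finset.mem_filter.mpr ⟨hgM tt httP, ?_⟩,
          Finset.mem_image.mpr ⟨tt, httP, rfl⟩⟩
        rw [hgB tt httP, htt1]
    have hPt : P.filter (fun tt => tt.1 = t)
        = (Mt.image fun p => cS p.2).image fun t' => (t, t') := by
      ext tt
      constructor
      · intro h
        obtain ⟨httP, htt1⟩ := Finset.mem_filter.mp h
        obtain ⟨p, hp⟩ := (hmemP tt).mp httP
        obtain ⟨hpM, hp1, hp2⟩ := (hmemG _ _ _).mp hp
        refine Finset.mem_image.mpr ⟨cS p.2, Finset.mem_image.mpr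
          ⟨p, Finset.mem_filter.mpr ⟨hpM, by rw [hp1, htt1]⟩, rfl⟩, ?_⟩
        rw [hp2]
        exact Prod.ext htt1.symm rfl
      · intro h
        obtain ⟨t', ht', rfl⟩ := Finset.mem_image.mp h
        obtain ⟨p, hp, rfl⟩ := Finset.mem_image.mp ht'
        obtain ⟨hpM, hp1⟩ := Finset.mem_filter.mp hp
        refine Finset.mem_filter.mpr ⟨(hmemP _).mpr ⟨p, (hmemG _ _ _).mpr ⟨hpM, hp1, rfl⟩⟩, rfl⟩
    have hcard1 : (Mt ∩ D).card = dB t := by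
      rw [hMtD, Finset.card_image_of_injOn (fun x hx y hy hxy =>
        hginj x (Finset.mem_filter.mp hx).1 y (Finset.mem_filter.mp hy).1 hxy), hPt,
        Finset.card_image_of_injective _ (fun a b hab => by simpa using hab), hdB]
    have hcardMt : Mt.card = qB t := (hqB t).symm
    have hcardX : (Mt \ D).card = qB t - dB t := by
      have h1 : Mt \ D = Mt \ (Mt ∩ D) := by
        ext p
        simp only [Finset.mem_sdiff, Finset.mem_inter]
        tauto
      rw [h1, Finset.card_sdiff_of_subset Finset.inter_subset_left, hcard1, hcardMt]
    -- multiset inclusion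
    have hmble : ((Mt \ D).val.map fun p => b p.1)
        ≤ ((univ.filter fun i => cB i = t).val.map b) := by
      have hXM : Mt \ D ⊆ M := fun p hp => hMtM (Finset.mem_sdiff.mp hp).1
      have himval : ((Mt \ D).image Prod.fst).val = (Mt \ D).val.map Prod.fst :=
        Finset.image_val_of_injOn (hfstinj _ hXM)
      have hsub : (Mt \ D).image Prod.fst ⊆ univ.filter fun i => cB i = t := by
        intro i hi
        obtain ⟨p, hp, rfl⟩ := Finset.mem_image.mp hi
        have := (Finset.mem_filter.mp (Finset.mem_sdiff.mp hp).1).2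
        exact Finset.mem_filter.mpr ⟨Finset.mem_univ _, this⟩
      calc ((Mt \ D).val.map fun p => b p.1)
          = ((Mt \ D).val.map Prod.fst).map b := by
            rw [Multiset.map_map]; rfl
        _ = ((Mt \ D).image Prod.fst).val.map b := by rw [himval]
        _ ≤ ((univ.filter fun i => cB i = t).val.map b) :=
            Multiset.map_le_map (Finset.val_le_iff.mpr hsub)
    have hkey := sum_le_topSum hmble
    rw [Multiset.card_map, show ((Mt \ D).val.card) = (Mt \ D).card from rfl, hcardX] at hkey
    calc ∑ p ∈ Mt \ D, b p.1 = ((Mt \ D).val.map fun p => b p.1).sum :=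
          Finset.sum_eq_multiset_sum _ _
      _ ≤ _ := hkey
  -- seller-side bound
  have hseller : ∀ t : κ,
      botSum ((univ.filter fun j => cS j = t).val.map s) (qS t - dS t) ≤
        ∑ p ∈ (M.filter fun p => cS p.2 = t) \ D, s p.2 := by
    intro t
    set Mt : Finset (B × S) := M.filter fun p => cS p.2 = t with hMt
    have hMtM : Mt ⊆ M := Finset.filter_subset _ _
    have hMtD : Mt ∩ D = (P.filter fun tt => tt.2 = t).image g := by
      ext p
      constructor
      · intro hp
        obtain ⟨hp1, hp2⟩ := Finset.mem_inter.mp hp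
        rw [hD] at hp2
        obtain ⟨tt, htt, rfl⟩ := Finset.mem_image.mp hp2
        refine Finset.mem_image.mpr ⟨tt, Finset.mem_filter.mpr ⟨htt, ?_⟩, rfl⟩
        rw [← hgS tt htt]
        exact (Finset.mem_filter.mp hp1).2
      · intro hp
        obtain ⟨tt, htt, rfl⟩ := Finset.mem_image.mp hp
        obtain ⟨httP, htt1⟩ := Finset.mem_filter.mp htt
        refine Finset.mem_inter.mpr ⟨Finset.mem_filter.mpr ⟨hgM tt httP, ?_⟩,
          Finset.mem_image.mpr ⟨tt, httP, rfl⟩⟩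
        rw [hgS tt httP, htt1]
    have hPt : P.filter (fun tt => tt.2 = t)
        = (Mt.image fun p => cB p.1).image fun t1 => (t1, t) := by
      ext tt
      constructor
      · intro h
        obtain ⟨httP, htt1⟩ := Finset.mem_filter.mp h
        obtain ⟨p, hp⟩ := (hmemP tt).mp httP
        obtain ⟨hpM, hp1, hp2⟩ := (hmemG _ _ _).mp hp
        refine Finset.mem_image.mpr ⟨cB p.1, Finset.mem_image.mpr
          ⟨p, Finset.mem_filter.mpr ⟨hpM, by rw [hp2, htt1]⟩, rfl⟩, ?_⟩
        rw [hp1]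
        exact Prod.ext rfl htt1.symm
      · intro h
        obtain ⟨t1, ht1, rfl⟩ := Finset.mem_image.mp h
        obtain ⟨p, hp, rfl⟩ := Finset.mem_image.mp ht1
        obtain ⟨hpM, hp2⟩ := Finset.mem_filter.mp hp
        refine Finset.mem_filter.mpr ⟨(hmemP _).mpr ⟨p, (hmemG _ _ _).mpr ⟨hpM, rfl, hp2⟩⟩, rfl⟩
    have hcard1 : (Mt ∩ D).card = dS t := by
      rw [hMtD, Finset.card_image_of_injOn (fun x hx y hy hxy =>
        hginj x (Finset.mem_filter.mp hx).1 y (Finset.mem_filter.mp hy).1 hxy), hPt,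
        Finset.card_image_of_injective _ (fun a c hac => by simpa using hac), hdS]
    have hcardMt : Mt.card = qS t := (hqS t).symm
    have hcardX : (Mt \ D).card = qS t - dS t := by
      have h1 : Mt \ D = Mt \ (Mt ∩ D) := by
        ext p
        simp only [Finset.mem_sdiff, Finset.mem_inter]
        tauto
      rw [h1, Finset.card_sdiff_of_subset Finset.inter_subset_left, hcard1, hcardMt]
    have hmble : ((Mt \ D).val.map fun p => s p.2)
        ≤ ((univ.filter fun j => cS j = t).val.map s) := by
      have hXM : Mt \ D ⊆ M := fun p hp => hMtM (Finset.mem_sdiff.mp hp).1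
      have himval : ((Mt \ D).image Prod.snd).val = (Mt \ D).val.map Prod.snd :=
        Finset.image_val_of_injOn (hsndinj _ hXM)
      have hsub : (Mt \ D).image Prod.snd ⊆ univ.filter fun j => cS j = t := by
        intro j hj
        obtain ⟨p, hp, rfl⟩ := Finset.mem_image.mp hj
        have := (Finset.mem_filter.mp (Finset.mem_sdiff.mp hp).1).2
        exact Finset.mem_filter.mpr ⟨Finset.mem_univ _, this⟩
      calc ((Mt \ D).val.map fun p => s p.2)
          = ((Mt \ D).val.map Prod.snd).map s := by
            rw [Multiset.map_map]; rfl
        _ = ((Mt \ D).image Prod.snd).val.map s := by rw [himval]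
        _ ≤ ((univ.filter fun j => cS j = t).val.map s) :=
            Multiset.map_le_map (Finset.val_le_iff.mpr hsub)
    have hkey := botSum_le_sum hmble
    rw [Multiset.card_map, show ((Mt \ D).val.card) = (Mt \ D).card from rfl, hcardX] at hkey
    calc botSum ((univ.filter fun j => cS j = t).val.map s) (qS t - dS t)
        ≤ ((Mt \ D).val.map fun p => s p.2).sum := hkey
      _ = ∑ p ∈ Mt \ D, s p.2 := (Finset.sum_eq_multiset_sum _ _).symm
  -- collapse sums over classes into sums over M \ D
  have hsumB : ∑ t ∈ univ.filter (fun t => 0 < qB t),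
      ∑ p ∈ (M.filter fun p => cB p.1 = t) \ D, b p.1 = ∑ p ∈ M \ D, b p.1 := by
    have h1 : ∀ t : ι, (M.filter fun p => cB p.1 = t) \ D
        = (M \ D).filter fun p => cB p.1 = t := by
      intro t; ext p; simp only [Finset.mem_sdiff, Finset.mem_filter]; tauto
    rw [Finset.sum_congr rfl (fun t _ => by rw [h1 t])]
    rw [Finset.sum_subset (Finset.subset_univ _), Finset.sum_fiberwise]
    intro t _ ht
    have hq0 : (M.filter fun p => cB p.1 = t).card = 0 := by
      rw [← hqB t]
      simpa using ht
    have hemp : (M \ D).filter (fun p => cB p.1 = t) = ∅ := by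
      apply Finset.eq_empty_of_forall_notMem
      intro p hp
      have hpm : p ∈ M.filter fun p => cB p.1 = t := by
        obtain ⟨h2, h3⟩ := Finset.mem_filter.mp hp
        exact Finset.mem_filter.mpr ⟨(Finset.mem_sdiff.mp h2).1, h3⟩
      rw [Finset.card_eq_zero.mp hq0] at hpm
      exact absurd hpm (Finset.notMem_empty p)
    rw [hemp, Finset.sum_empty]
  have hsumS : ∑ t ∈ univ.filter (fun t => 0 < qS t),
      ∑ p ∈ (M.filter fun p => cS p.2 = t) \ D, s p.2 = ∑ p ∈ M \ D, s p.2 := by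
    have h1 : ∀ t : κ, (M.filter fun p => cS p.2 = t) \ D
        = (M \ D).filter fun p => cS p.2 = t := by
      intro t; ext p; simp only [Finset.mem_sdiff, Finset.mem_filter]; tauto
    rw [Finset.sum_congr rfl (fun t _ => by rw [h1 t])]
    rw [Finset.sum_subset (Finset.subset_univ _), Finset.sum_fiberwise]
    intro t _ ht
    have hq0 : (M.filter fun p => cS p.2 = t).card = 0 := by
      rw [← hqS t]
      simpa using ht
    have hemp : (M \ D).filter (fun p => cS p.2 = t) = ∅ := by
      apply Finset.eq_empty_of_forall_notMem
      intro p hp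
      have hpm : p ∈ M.filter fun p => cS p.2 = t := by
        obtain ⟨h2, h3⟩ := Finset.mem_filter.mp hp
        exact Finset.mem_filter.mpr ⟨(Finset.mem_sdiff.mp h2).1, h3⟩
      rw [Finset.card_eq_zero.mp hq0] at hpm
      exact absurd hpm (Finset.notMem_empty p)
    rw [hemp, Finset.sum_empty]
  -- put the two sides together
  have hmain : (∑ t ∈ univ.filter fun t => 0 < qB t,
        topSum ((univ.filter fun i => cB i = t).val.map b) (qB t - dB t)) -
      (∑ t ∈ univ.filter fun t => 0 < qS t,
        botSum ((univ.filter fun j => cS j = t).val.map s) (qS t - dS t))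
      ≥ (1 - 1 / (n:ℝ)) * matchWeight b s M := by
    have hB : ∑ p ∈ M \ D, b p.1 ≤ ∑ t ∈ univ.filter fun t => 0 < qB t,
        topSum ((univ.filter fun i => cB i = t).val.map b) (qB t - dB t) := by
      rw [← hsumB]
      exact Finset.sum_le_sum (fun t _ => hbuyer t)
    have hS : (∑ t ∈ univ.filter fun t => 0 < qS t,
        botSum ((univ.filter fun j => cS j = t).val.map s) (qS t - dS t))
        ≤ ∑ p ∈ M \ D, s p.2 := by
      rw [← hsumS]
      exact Finset.sum_le_sum (fun t _ => hseller t)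
    have hsplit : ∑ p ∈ M \ D, b p.1 - ∑ p ∈ M \ D, s p.2 = ∑ p ∈ M \ D, w p := by
      rw [← Finset.sum_sub_distrib]
    have hsd : ∑ p ∈ M \ D, w p = ∑ p ∈ M, w p - ∑ p ∈ D, w p := by
      have := Finset.sum_sdiff (f := w) hDM
      linarith
    have hfin : (1 - 1 / (n:ℝ)) * matchWeight b s M ≤ ∑ p ∈ M \ D, w p := by
      rw [hOPTw, hsd]
      have h1 : (1 - 1 / (n:ℝ)) * ∑ p ∈ M, w p
          = ∑ p ∈ M, w p - (1 / (n:ℝ)) * ∑ p ∈ M, w p := by ring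
      rw [h1]
      linarith [hDle]
    linarith [hB, hS, hsplit.symm ▸ hfin]
  -- bound the infimum
  have hposr : 0 < r t0.1 t0.2 := by omega
  have hmemX : (1 - 1 / (n:ℝ)) ∈
      {x : ℝ | ∃ t : ι, ∃ t' : κ, 0 < r t t' ∧ x = 1 - 1 / (r t t' : ℝ)} :=
    ⟨t0.1, t0.2, hposr, by rw [hn]⟩
  have hbdd : BddBelow {x : ℝ | ∃ t : ι, ∃ t' : κ, 0 < r t t' ∧ x = 1 - 1 / (r t t' : ℝ)} := by
    refine ⟨0, ?_⟩
    rintro x ⟨t, t', hpos, rfl⟩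
    have h1 : (1:ℝ) ≤ (r t t' : ℝ) := by exact_mod_cast hpos
    have h2 : 1 / (r t t' : ℝ) ≤ 1 := by
      rw [div_le_one (by linarith)]
      linarith
    linarith
  have hsInf : sInf {x : ℝ | ∃ t : ι, ∃ t' : κ, 0 < r t t' ∧ x = 1 - 1 / (r t t' : ℝ)}
      ≤ 1 - 1 / (n:ℝ) := csInf_le hbdd hmemX
  calc sInf {x : ℝ | ∃ t : ι, ∃ t' : κ, 0 < r t t' ∧ x = 1 - 1 / (r t t' : ℝ)} *
        matchWeight b s M
      ≤ (1 - 1 / (n:ℝ)) * matchWeight b s M := mul_le_mul_of_nonneg_right hsInf hOPT0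
    _ ≤ _ := hmain
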